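/- Let Z be a hypergeometric random variable with parameters (N, K, d) (number of marked objects when drawing d objects without replacement from N objects of which K are marked), and let μ = Kd/N. Then for every real c > 0, Pr[Z ≥ c] ≤ 2 e^c (c/μ)^{−c}. -/
import Mathlib

open scoped Classical

open Finset in
/-- Key natural-number inequality. -/
lemma hyp_nat_ineq (N K d k : ℕ) (hK : K ≤ N) (hd : d ≤ N) (hkd : k ≤ d) :
    K.choose k * (N - K).choose (d - k) * k.factorial * N ^ k
      ≤ K ^ k * d ^ k * N.choose d := by
  rcases le_or_gt k K with hkK | hkK
  · -- main case k ≤ K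
    have I : N ^ k * K.descFactorial k * (N - K).descFactorial (d - k)
        ≤ K ^ k * N.descFactorial d := by
      have h1 : N ^ k * K.descFactorial k ≤ K ^ k * ∏ i ∈ range k, (N - i) := by
        rw [Nat.descFactorial_eq_prod_range]
        have e1 : N ^ k * ∏ i ∈ range k, (K - i) = ∏ i ∈ range k, (N * (K - i)) := by
          rw [Finset.prod_mul_distrib, Finset.prod_const, Finset.card_range]
        have e2 : K ^ k * ∏ i ∈ range k, (N - i) = ∏ i ∈ range k, (K * (N - i)) := by
          rw [Finset.prod_mul_distrib, Finset.prod_const, Finset.card_range]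
        rw [e1, e2]
        apply Finset.prod_le_prod'
        intro i hi
        have h1 : N * (K - i) = N * K - N * i := Nat.mul_sub_left_distrib _ _ _
        have h2 : K * (N - i) = K * N - K * i := Nat.mul_sub_left_distrib _ _ _
        have h3 : K * i ≤ N * i := Nat.mul_le_mul_right i hK
        have h4 : N * K = K * N := Nat.mul_comm _ _
        omega
      have h2 : (N - K).descFactorial (d - k) ≤ ∏ i ∈ range (d - k), (N - (k + i)) := by
        rw [Nat.descFactorial_eq_prod_range]
        apply Finset.prod_le_prod'
        intro i hi
        omega
      have h3 : N.descFactorial d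
          = (∏ i ∈ range k, (N - i)) * ∏ i ∈ range (d - k), (N - (k + i)) := by
        rw [Nat.descFactorial_eq_prod_range]
        have : d = k + (d - k) := by omega
        rw [this, Finset.prod_range_add]
        simp
      calc N ^ k * K.descFactorial k * (N - K).descFactorial (d - k)
          ≤ (K ^ k * ∏ i ∈ range k, (N - i)) * ∏ i ∈ range (d - k), (N - (k + i)) :=
            Nat.mul_le_mul h1 h2
        _ = K ^ k * N.descFactorial d := by rw [h3]; ring
    -- translate to choose
    have e1 : K.descFactorial k = k.factorial * K.choose k :=
      Nat.descFactorial_eq_factorial_mul_choose _ _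
    have e2 : (N - K).descFactorial (d - k) = (d - k).factorial * (N - K).choose (d - k) :=
      Nat.descFactorial_eq_factorial_mul_choose _ _
    have e3 : N.descFactorial d = d.factorial * N.choose d :=
      Nat.descFactorial_eq_factorial_mul_choose _ _
    have e4 : d.factorial = d.descFactorial k * (d - k).factorial := by
      rw [Nat.descFactorial_eq_factorial_mul_choose]
      rw [mul_comm k.factorial, mul_assoc, ← Nat.choose_mul_factorial_mul_factorial hkd]
      ring
    have h5 : d.descFactorial k ≤ d ^ k := Nat.descFactorial_le_pow _ _
    rw [e1, e2, e3, e4] at I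
    have I2 : (K.choose k * (N - K).choose (d - k) * k.factorial * N ^ k)
          * (d - k).factorial ≤ (K ^ k * d ^ k * N.choose d) * (d - k).factorial := by
      calc (K.choose k * (N - K).choose (d - k) * k.factorial * N ^ k) * (d - k).factorial
          = N ^ k * (k.factorial * K.choose k) * ((d - k).factorial * (N - K).choose (d - k)) := by
            ring
        _ ≤ K ^ k * (d.descFactorial k * (d - k).factorial * N.choose d) := I
        _ ≤ K ^ k * (d ^ k * (d - k).factorial * N.choose d) := by
            exact Nat.mul_le_mul_left _ (Nat.mul_le_mul_right _ (Nat.mul_le_mul_right _ h5))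
        _ = (K ^ k * d ^ k * N.choose d) * (d - k).factorial := by ring
    exact Nat.le_of_mul_le_mul_right I2 (Nat.factorial_pos _)
  · simp [Nat.choose_eq_zero_of_lt hkK]

/-- Termwise bound: each hypergeometric probability is at most `μ^k / k!`. -/
lemma hyp_term_le (N K d k : ℕ) (hN : 0 < N) (hK : K ≤ N) (hd : d ≤ N) (hkd : k ≤ d) :
    ((K.choose k * (N - K).choose (d - k) : ℕ) : ℝ) / ((N.choose d : ℕ) : ℝ)
      ≤ ((K : ℝ) * d / N) ^ k / (k.factorial : ℝ) := by
  have hCpos : (0 : ℝ) < (N.choose d : ℝ) := by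
    exact_mod_cast Nat.choose_pos hd
  have hNpos : (0 : ℝ) < (N : ℝ) := by exact_mod_cast hN
  have hden : (0 : ℝ) < (N : ℝ) ^ k * (k.factorial : ℝ) := by positivity
  rw [div_le_div_iff₀ hCpos (by positivity)]
  have key := hyp_nat_ineq N K d k hK hd hkd
  have key' : ((K.choose k * (N - K).choose (d - k) * k.factorial * N ^ k : ℕ) : ℝ)
      ≤ ((K ^ k * d ^ k * N.choose d : ℕ) : ℝ) := by exact_mod_cast key
  push_cast at key'
  rw [div_pow, mul_pow]
  rw [div_mul_eq_mul_div, le_div_iff₀ (by positivity)]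
  push_cast
  nlinarith [key']

open Finset in
/-- The total probability is 1 (Vandermonde). -/
lemma hyp_sum_eq_one (N K d : ℕ) (hK : K ≤ N) (hd : d ≤ N) :
    ∑ k ∈ Finset.range (d + 1), (K.choose k * (N - K).choose (d - k)) = N.choose d := by
  have h := Nat.add_choose_eq K (N - K) d
  rw [Nat.add_sub_cancel' hK] at h
  rw [h, Finset.Nat.sum_antidiagonal_eq_sum_range_succ (fun i j => K.choose i * (N - K).choose j)]

theorem hypergeometric_tail_bound (N K d : ℕ) (hN : 0 < N) (hK : K ≤ N) (hd : d ≤ N)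
    (c : ℝ) (hc : 0 < c) :
    (∑ k ∈ (Finset.range (d + 1)).filter (fun k : ℕ => c ≤ (k : ℝ)),
        ((K.choose k * (N - K).choose (d - k) : ℕ) : ℝ) / ((N.choose d : ℕ) : ℝ))
      ≤ 2 * Real.exp c * (c / ((K : ℝ) * d / N)) ^ (-c) := by
  classical
  set μ : ℝ := (K : ℝ) * d / N with hμ
  have hNpos : (0 : ℝ) < (N : ℝ) := by exact_mod_cast hN
  have hμnn : 0 ≤ μ := by positivity
  have hCpos : (0 : ℝ) < (N.choose d : ℝ) := by exact_mod_cast Nat.choose_pos hd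
  -- trivial case μ = 0
  rcases eq_or_lt_of_le hμnn with hμ0 | hμpos
  · have hLHS : (∑ k ∈ (Finset.range (d + 1)).filter (fun k : ℕ => c ≤ (k : ℝ)),
        ((K.choose k * (N - K).choose (d - k) : ℕ) : ℝ) / ((N.choose d : ℕ) : ℝ)) = 0 := by
      apply Finset.sum_eq_zero
      intro k hk
      simp only [Finset.mem_filter, Finset.mem_range] at hk
      have hk1 : 1 ≤ k := by
        by_contra h
        push_neg at h
        interval_cases k
        · simp at hk; linarith
      have hKd : K = 0 ∨ d = 0 := by
        have : (K : ℝ) * d = 0 := by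
          have := hμ0.symm
          rw [hμ, div_eq_zero_iff] at this
          rcases this with h | h
          · exact h
          · exact absurd h (ne_of_gt hNpos)
        rcases mul_eq_zero.1 this with h | h
        · left; exact_mod_cast h
        · right; exact_mod_cast h
      rcases hKd with h | h
      · subst h
        rw [Nat.choose_eq_zero_of_lt hk1]
        simp
      · subst h
        omega
    rw [hLHS]
    positivity
  · -- μ > 0
    have hRHSrw : (c / μ) ^ (-c) = (μ / c) ^ c := by
      rw [Real.rpow_neg (by positivity), ← Real.inv_rpow (by positivity), inv_div]
    rw [hRHSrw]
    have hsumnn : ∀ k ∈ Finset.range (d + 1),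
        0 ≤ ((K.choose k * (N - K).choose (d - k) : ℕ) : ℝ) / ((N.choose d : ℕ) : ℝ) := by
      intro k _; positivity
    rcases le_or_gt c μ with hcμ | hμc
    · -- trivial case: RHS ≥ 2 ≥ 1 ≥ LHS
      have hLHS1 : (∑ k ∈ (Finset.range (d + 1)).filter (fun k : ℕ => c ≤ (k : ℝ)),
          ((K.choose k * (N - K).choose (d - k) : ℕ) : ℝ) / ((N.choose d : ℕ) : ℝ)) ≤ 1 := by
        calc (∑ k ∈ (Finset.range (d + 1)).filter (fun k : ℕ => c ≤ (k : ℝ)),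
              ((K.choose k * (N - K).choose (d - k) : ℕ) : ℝ) / ((N.choose d : ℕ) : ℝ))
            ≤ ∑ k ∈ Finset.range (d + 1),
              ((K.choose k * (N - K).choose (d - k) : ℕ) : ℝ) / ((N.choose d : ℕ) : ℝ) :=
              Finset.sum_le_sum_of_subset_of_nonneg (Finset.filter_subset _ _)
                (fun k hk _ => hsumnn k hk)
          _ = (∑ k ∈ Finset.range (d + 1),
                ((K.choose k * (N - K).choose (d - k) : ℕ) : ℝ)) / ((N.choose d : ℕ) : ℝ) := by
              rw [Finset.sum_div]
          _ = 1 := by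
              rw [div_eq_one_iff_eq (ne_of_gt hCpos)]
              exact_mod_cast hyp_sum_eq_one N K d hK hd
      have h1 : (1 : ℝ) ≤ Real.exp c := Real.one_le_exp hc.le
      have h2 : (1 : ℝ) ≤ (μ / c) ^ c := by
        apply Real.one_le_rpow (by rw [le_div_iff₀ hc]; linarith) hc.le
      nlinarith
    · -- main case μ < c
      calc (∑ k ∈ (Finset.range (d + 1)).filter (fun k : ℕ => c ≤ (k : ℝ)),
            ((K.choose k * (N - K).choose (d - k) : ℕ) : ℝ) / ((N.choose d : ℕ) : ℝ))
          ≤ ∑ k ∈ (Finset.range (d + 1)).filter (fun k : ℕ => c ≤ (k : ℝ)),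
            (μ / c) ^ c * (c ^ k / (k.factorial : ℝ)) := by
            apply Finset.sum_le_sum
            intro k hk
            simp only [Finset.mem_filter, Finset.mem_range] at hk
            have hkd : k ≤ d := by omega
            have hck : c ≤ (k : ℝ) := hk.2
            calc ((K.choose k * (N - K).choose (d - k) : ℕ) : ℝ) / ((N.choose d : ℕ) : ℝ)
                ≤ μ ^ k / (k.factorial : ℝ) := hyp_term_le N K d k hN hK hd hkd
              _ ≤ (μ / c) ^ c * (c ^ k / (k.factorial : ℝ)) := by
                  rw [div_le_iff₀ (by positivity : (0:ℝ) < (k.factorial : ℝ))]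
                  have hμk : μ ^ k = (μ / c) ^ k * c ^ k := by
                    rw [← mul_pow, div_mul_cancel₀ _ (ne_of_gt hc)]
                  have hpow : (μ / c) ^ k ≤ (μ / c) ^ c := by
                    rw [← Real.rpow_natCast (μ / c) k]
                    exact Real.rpow_le_rpow_of_exponent_ge (by positivity)
                      (by rw [div_le_one hc]; linarith) hck
                  have hck' : (0:ℝ) ≤ c ^ k := by positivity
                  calc μ ^ k = (μ / c) ^ k * c ^ k := hμk
                    _ ≤ (μ / c) ^ c * c ^ k := mul_le_mul_of_nonneg_right hpow hck'
                    _ = (μ / c) ^ c * (c ^ k / (k.factorial : ℝ)) * (k.factorial : ℝ) := by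
                        field_simp
        _ = (μ / c) ^ c * ∑ k ∈ (Finset.range (d + 1)).filter (fun k : ℕ => c ≤ (k : ℝ)),
              c ^ k / (k.factorial : ℝ) := by rw [Finset.mul_sum]
        _ ≤ (μ / c) ^ c * Real.exp c := by
            apply mul_le_mul_of_nonneg_left _ (by positivity)
            calc (∑ k ∈ (Finset.range (d + 1)).filter (fun k : ℕ => c ≤ (k : ℝ)),
                  c ^ k / (k.factorial : ℝ))
                ≤ ∑ k ∈ Finset.range (d + 1), c ^ k / (k.factorial : ℝ) :=
                  Finset.sum_le_sum_of_subset_of_nonneg (Finset.filter_subset _ _)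
                    (fun k _ _ => by positivity)
              _ ≤ Real.exp c := Real.sum_le_exp_of_nonneg hc.le _
        _ ≤ 2 * Real.exp c * (μ / c) ^ c := by
            have h1 : (0:ℝ) ≤ (μ / c) ^ c := by positivity
            have h2 : (0:ℝ) < Real.exp c := Real.exp_pos c
            nlinarith
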